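/- In B_6, with a = σ_1σ_2^{−1}, b = σ_1σ_3^{−1}, r = α^2σ_1^{−10} where α = σ_1⋯σ_5, one has σ_1σ_5^{−1} = b·r·b·r^{−1}. -/

import Mathlib

/-- Artin braid relators for the braid group on `n` strands, with generators
`FreeGroup.of i` corresponding to `σ_{i+1}` for `i : Fin (n-1)`. -/
def braidRels (n : ℕ) : Set (FreeGroup (Fin (n - 1))) :=
  {r | ∃ i j : Fin (n - 1),
      ((j : ℕ) ≥ (i : ℕ) + 2 ∧
        r = FreeGroup.of i * FreeGroup.of j * (FreeGroup.of i)⁻¹ * (FreeGroup.of j)⁻¹) ∨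
      ((j : ℕ) = (i : ℕ) + 1 ∧
        r = FreeGroup.of i * FreeGroup.of j * FreeGroup.of i *
          (FreeGroup.of j * FreeGroup.of i * FreeGroup.of j)⁻¹)}

/-- The braid group on `n` strands. -/
def BraidGroup (n : ℕ) : Type := PresentedGroup (braidRels n)

instance (n : ℕ) : Group (BraidGroup n) :=
  inferInstanceAs (Group (PresentedGroup (braidRels n)))

/-- The Artin generator `σ_i` of `BraidGroup n`, for `1 ≤ i ≤ n-1` (junk value `1` otherwise). -/
def σ {n : ℕ} (i : ℕ) : BraidGroup n :=
  if h : 1 ≤ i ∧ i < n then PresentedGroup.of (⟨i - 1, by omega⟩ : Fin (n - 1)) else 1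

/-- The element `α = σ_1 σ_2 ⋯ σ_{n-1}`. -/
def α (n : ℕ) : BraidGroup n := ((List.range (n - 1)).map (fun i => σ (i + 1))).prod

/-- The half-twist `σ_j` for an index `j` taken modulo `n`, defined by conjugating
`σ_1` by the rotation `α`: `σ_{1+m} = α^m σ_1 α^{-m}`. -/
def σm {n : ℕ} (j : ℤ) : BraidGroup n := (α n) ^ (j - 1) * σ 1 * (α n) ^ (1 - j)

lemma rel_one {β : Type*} {rels : Set (FreeGroup β)} {r : FreeGroup β} (h : r ∈ rels) :
    PresentedGroup.mk rels r = 1 := by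
  exact (QuotientGroup.eq_one_iff r).mpr (Subgroup.subset_normalClosure h)

lemma braid_comm {n : ℕ} (i j : Fin (n - 1)) (h : (j : ℕ) ≥ (i : ℕ) + 2) :
    (PresentedGroup.of i : BraidGroup n) * PresentedGroup.of j
      = PresentedGroup.of j * PresentedGroup.of i := by
  have h1 : (PresentedGroup.of i : BraidGroup n) * PresentedGroup.of j *
      (PresentedGroup.of i)⁻¹ * (PresentedGroup.of j)⁻¹ = 1 := by
    have := rel_one (rels := braidRels n)
      (r := FreeGroup.of i * FreeGroup.of j * (FreeGroup.of i)⁻¹ * (FreeGroup.of j)⁻¹)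
      ⟨i, j, Or.inl ⟨h, rfl⟩⟩
    simpa [map_mul, map_inv, PresentedGroup.of] using this
  calc (PresentedGroup.of i : BraidGroup n) * PresentedGroup.of j
      = (PresentedGroup.of i * PresentedGroup.of j * (PresentedGroup.of i)⁻¹ *
          (PresentedGroup.of j)⁻¹) * (PresentedGroup.of j * PresentedGroup.of i) := by group
    _ = PresentedGroup.of j * PresentedGroup.of i := by rw [h1]; group

lemma braid_braid {n : ℕ} (i j : Fin (n - 1)) (h : (j : ℕ) = (i : ℕ) + 1) :
    (PresentedGroup.of i : BraidGroup n) * PresentedGroup.of j * PresentedGroup.of i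
      = PresentedGroup.of j * PresentedGroup.of i * PresentedGroup.of j := by
  have h1 : (PresentedGroup.of i : BraidGroup n) * PresentedGroup.of j * PresentedGroup.of i *
      (PresentedGroup.of j * PresentedGroup.of i * PresentedGroup.of j)⁻¹ = 1 := by
    have := rel_one (rels := braidRels n)
      (r := FreeGroup.of i * FreeGroup.of j * FreeGroup.of i *
        (FreeGroup.of j * FreeGroup.of i * FreeGroup.of j)⁻¹)
      ⟨i, j, Or.inr ⟨h, rfl⟩⟩
    simpa [map_mul, map_inv, PresentedGroup.of] using this
  calc (PresentedGroup.of i : BraidGroup n) * PresentedGroup.of j * PresentedGroup.of i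
      = (PresentedGroup.of i * PresentedGroup.of j * PresentedGroup.of i *
          (PresentedGroup.of j * PresentedGroup.of i * PresentedGroup.of j)⁻¹) *
          (PresentedGroup.of j * PresentedGroup.of i * PresentedGroup.of j) := by group
    _ = _ := by rw [h1]; group

lemma sigma_eq_of {i : ℕ} (h1 : 1 ≤ i) (h2 : i < 6) :
    (σ i : BraidGroup 6) = PresentedGroup.of (⟨i - 1, by omega⟩ : Fin (6 - 1)) := by
  rw [σ]
  exact dif_pos ⟨h1, h2⟩

lemma comm6 {i j : ℕ} (h1 : 1 ≤ i) (h2 : j < 6) (h : i + 2 ≤ j) :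
    (σ i : BraidGroup 6) * σ j = σ j * σ i := by
  rw [sigma_eq_of h1 (by omega), sigma_eq_of (by omega : 1 ≤ j) h2]
  exact braid_comm _ _ (by simp; omega)

lemma braid6 {i : ℕ} (h1 : 1 ≤ i) (h2 : i + 1 < 6) :
    (σ i : BraidGroup 6) * σ (i + 1) * σ i = σ (i + 1) * σ i * σ (i + 1) := by
  rw [sigma_eq_of h1 (by omega), sigma_eq_of (by omega : 1 ≤ i + 1) h2]
  exact braid_braid _ _ (by simp; omega)

lemma alpha6 : α 6 = σ 1 * σ 2 * σ 3 * σ 4 * σ 5 := by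
  show ((List.range 5).map (fun i => σ (i + 1))).prod = _
  rw [show List.range 5 = [0, 1, 2, 3, 4] from rfl]
  simp [mul_assoc]

theorem B6_sigma15_identity :
    ∀ b r : BraidGroup 6, b = σ 1 * (σ 3)⁻¹ → r = (α 6) ^ 2 * ((σ 1 : BraidGroup 6) ^ 10)⁻¹ →
      σ 1 * (σ 5)⁻¹ = b * r * b * r⁻¹ := by
  intro b r hb hr
  have h13 : (σ 1 : BraidGroup 6) * σ 3 = σ 3 * σ 1 := comm6 (by norm_num) (by norm_num) (by norm_num)
  have h14 : (σ 1 : BraidGroup 6) * σ 4 = σ 4 * σ 1 := comm6 (by norm_num) (by norm_num) (by norm_num)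
  have h15 : (σ 1 : BraidGroup 6) * σ 5 = σ 5 * σ 1 := comm6 (by norm_num) (by norm_num) (by norm_num)
  have h24 : (σ 2 : BraidGroup 6) * σ 4 = σ 4 * σ 2 := comm6 (by norm_num) (by norm_num) (by norm_num)
  have h25 : (σ 2 : BraidGroup 6) * σ 5 = σ 5 * σ 2 := comm6 (by norm_num) (by norm_num) (by norm_num)
  have h35 : (σ 3 : BraidGroup 6) * σ 5 = σ 5 * σ 3 := comm6 (by norm_num) (by norm_num) (by norm_num)
  have b12 : (σ 1 : BraidGroup 6) * σ 2 * σ 1 = σ 2 * σ 1 * σ 2 := braid6 (by norm_num) (by norm_num)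
  have b23 : (σ 2 : BraidGroup 6) * σ 3 * σ 2 = σ 3 * σ 2 * σ 3 := braid6 (by norm_num) (by norm_num)
  have b34 : (σ 3 : BraidGroup 6) * σ 4 * σ 3 = σ 4 * σ 3 * σ 4 := braid6 (by norm_num) (by norm_num)
  have b45 : (σ 4 : BraidGroup 6) * σ 5 * σ 4 = σ 5 * σ 4 * σ 5 := braid6 (by norm_num) (by norm_num)
  have hα := alpha6
  rw [pow_two] at hr
  -- shift lemmas: α σ_i = σ_{i+1} α
  have s1 : α 6 * σ 1 = σ 2 * α 6 := by
    rw [hα]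
    calc σ 1 * σ 2 * σ 3 * σ 4 * σ 5 * σ 1
        = σ 1 * σ 2 * σ 3 * σ 4 * (σ 5 * σ 1) := by group
      _ = σ 1 * σ 2 * σ 3 * σ 4 * (σ 1 * σ 5) := by rw [← h15]
      _ = σ 1 * σ 2 * σ 3 * (σ 4 * σ 1) * σ 5 := by group
      _ = σ 1 * σ 2 * σ 3 * (σ 1 * σ 4) * σ 5 := by rw [← h14]
      _ = σ 1 * σ 2 * (σ 3 * σ 1) * σ 4 * σ 5 := by group
      _ = σ 1 * σ 2 * (σ 1 * σ 3) * σ 4 * σ 5 := by rw [← h13]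
      _ = (σ 1 * σ 2 * σ 1) * σ 3 * σ 4 * σ 5 := by group
      _ = (σ 2 * σ 1 * σ 2) * σ 3 * σ 4 * σ 5 := by rw [b12]
      _ = σ 2 * (σ 1 * σ 2 * σ 3 * σ 4 * σ 5) := by group
  have s2 : α 6 * σ 2 = σ 3 * α 6 := by
    rw [hα]
    calc σ 1 * σ 2 * σ 3 * σ 4 * σ 5 * σ 2
        = σ 1 * σ 2 * σ 3 * σ 4 * (σ 5 * σ 2) := by group
      _ = σ 1 * σ 2 * σ 3 * σ 4 * (σ 2 * σ 5) := by rw [← h25]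
      _ = σ 1 * σ 2 * σ 3 * (σ 4 * σ 2) * σ 5 := by group
      _ = σ 1 * σ 2 * σ 3 * (σ 2 * σ 4) * σ 5 := by rw [← h24]
      _ = σ 1 * (σ 2 * σ 3 * σ 2) * σ 4 * σ 5 := by group
      _ = σ 1 * (σ 3 * σ 2 * σ 3) * σ 4 * σ 5 := by rw [b23]
      _ = (σ 1 * σ 3) * σ 2 * σ 3 * σ 4 * σ 5 := by group
      _ = (σ 3 * σ 1) * σ 2 * σ 3 * σ 4 * σ 5 := by rw [h13]
      _ = σ 3 * (σ 1 * σ 2 * σ 3 * σ 4 * σ 5) := by group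
  have s3 : α 6 * σ 3 = σ 4 * α 6 := by
    rw [hα]
    calc σ 1 * σ 2 * σ 3 * σ 4 * σ 5 * σ 3
        = σ 1 * σ 2 * σ 3 * σ 4 * (σ 5 * σ 3) := by group
      _ = σ 1 * σ 2 * σ 3 * σ 4 * (σ 3 * σ 5) := by rw [← h35]
      _ = σ 1 * σ 2 * (σ 3 * σ 4 * σ 3) * σ 5 := by group
      _ = σ 1 * σ 2 * (σ 4 * σ 3 * σ 4) * σ 5 := by rw [b34]
      _ = σ 1 * (σ 2 * σ 4) * σ 3 * σ 4 * σ 5 := by group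
      _ = σ 1 * (σ 4 * σ 2) * σ 3 * σ 4 * σ 5 := by rw [h24]
      _ = (σ 1 * σ 4) * σ 2 * σ 3 * σ 4 * σ 5 := by group
      _ = (σ 4 * σ 1) * σ 2 * σ 3 * σ 4 * σ 5 := by rw [h14]
      _ = σ 4 * (σ 1 * σ 2 * σ 3 * σ 4 * σ 5) := by group
  have s4 : α 6 * σ 4 = σ 5 * α 6 := by
    rw [hα]
    calc σ 1 * σ 2 * σ 3 * σ 4 * σ 5 * σ 4
        = σ 1 * σ 2 * σ 3 * (σ 4 * σ 5 * σ 4) := by group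
      _ = σ 1 * σ 2 * σ 3 * (σ 5 * σ 4 * σ 5) := by rw [b45]
      _ = σ 1 * σ 2 * (σ 3 * σ 5) * σ 4 * σ 5 := by group
      _ = σ 1 * σ 2 * (σ 5 * σ 3) * σ 4 * σ 5 := by rw [h35]
      _ = σ 1 * (σ 2 * σ 5) * σ 3 * σ 4 * σ 5 := by group
      _ = σ 1 * (σ 5 * σ 2) * σ 3 * σ 4 * σ 5 := by rw [h25]
      _ = (σ 1 * σ 5) * σ 2 * σ 3 * σ 4 * σ 5 := by group
      _ = (σ 5 * σ 1) * σ 2 * σ 3 * σ 4 * σ 5 := by rw [h15]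
      _ = σ 5 * (σ 1 * σ 2 * σ 3 * σ 4 * σ 5) := by group
  -- α² σ1 α⁻² = σ3, α² σ3 α⁻² = σ5
  have t1 : α 6 * α 6 * σ 1 = σ 3 * (α 6 * α 6) := by
    calc α 6 * α 6 * σ 1 = α 6 * (α 6 * σ 1) := by group
      _ = α 6 * (σ 2 * α 6) := by rw [s1]
      _ = (α 6 * σ 2) * α 6 := by group
      _ = (σ 3 * α 6) * α 6 := by rw [s2]
      _ = σ 3 * (α 6 * α 6) := by group
  have t3 : α 6 * α 6 * σ 3 = σ 5 * (α 6 * α 6) := by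
    calc α 6 * α 6 * σ 3 = α 6 * (α 6 * σ 3) := by group
      _ = α 6 * (σ 4 * α 6) := by rw [s3]
      _ = (α 6 * σ 4) * α 6 := by group
      _ = (σ 5 * α 6) * α 6 := by rw [s4]
      _ = σ 5 * (α 6 * α 6) := by group
  have t3' : (α 6 * α 6) * (σ 3)⁻¹ = (σ 5)⁻¹ * (α 6 * α 6) := by
    calc (α 6 * α 6) * (σ 3)⁻¹ = (σ 5)⁻¹ * (σ 5 * (α 6 * α 6)) * (σ 3)⁻¹ := by group
      _ = (σ 5)⁻¹ * (α 6 * α 6 * σ 3) * (σ 3)⁻¹ := by rw [← t3]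
      _ = (σ 5)⁻¹ * (α 6 * α 6) := by group
  have hc13 : Commute (σ 1 : BraidGroup 6) (σ 3) := h13
  have hcp : Commute ((σ 1 : BraidGroup 6) ^ 10)⁻¹ (σ 1 * (σ 3)⁻¹) :=
    (((Commute.refl (σ 1 : BraidGroup 6)).mul_right hc13.inv_right).pow_left 10).inv_left
  have hpow : ((σ 1 : BraidGroup 6) ^ 10)⁻¹ * (σ 1 * (σ 3)⁻¹) * (σ 1 : BraidGroup 6) ^ 10
      = σ 1 * (σ 3)⁻¹ := by
    rw [hcp.eq]
    exact inv_mul_cancel_right _ _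
  have key : r * b * r⁻¹ = σ 3 * (σ 5)⁻¹ := by
    rw [hb, hr]
    calc α 6 * α 6 * ((σ 1 : BraidGroup 6) ^ 10)⁻¹ * (σ 1 * (σ 3)⁻¹) *
          (α 6 * α 6 * ((σ 1 : BraidGroup 6) ^ 10)⁻¹)⁻¹
        = α 6 * α 6 * (((σ 1 : BraidGroup 6) ^ 10)⁻¹ * (σ 1 * (σ 3)⁻¹) *
            (σ 1 : BraidGroup 6) ^ 10) * (α 6 * α 6)⁻¹ := by group
      _ = α 6 * α 6 * (σ 1 * (σ 3)⁻¹) * (α 6 * α 6)⁻¹ := by rw [hpow]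
      _ = (α 6 * α 6 * σ 1) * (σ 3)⁻¹ * (α 6 * α 6)⁻¹ := by group
      _ = (σ 3 * (α 6 * α 6)) * (σ 3)⁻¹ * (α 6 * α 6)⁻¹ := by rw [t1]
      _ = σ 3 * ((α 6 * α 6) * (σ 3)⁻¹) * (α 6 * α 6)⁻¹ := by group
      _ = σ 3 * ((σ 5)⁻¹ * (α 6 * α 6)) * (α 6 * α 6)⁻¹ := by rw [t3']
      _ = σ 3 * (σ 5)⁻¹ := by group
  calc (σ 1 : BraidGroup 6) * (σ 5)⁻¹
      = (σ 1 * (σ 3)⁻¹) * (σ 3 * (σ 5)⁻¹) := by group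
    _ = b * (r * b * r⁻¹) := by rw [← hb, ← key]
    _ = b * r * b * r⁻¹ := by group
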